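/- Let H be a separable real Hilbert space, ρ > 0, and X ∈ H. Then ⟨X, (ρI + XXᵀ)^{-1} X⟩ = ‖X‖² / (ρ + ‖X‖²). Moreover, if V is any bounded positive self-adjoint operator on H with XXᵀ ⪯ V (i.e., V − XXᵀ is positive), then ‖(ρI + V)^{-1/2} X‖² ≤ ‖X‖² / (ρ + ‖X‖²) ≤ 1. -/

import Mathlib

open MeasureTheory Filter Real
open scoped RealInnerProductSpace

noncomputable def outerProd {H : Type*} [NormedAddCommGroup H] [InnerProductSpace ℝ H]
    (x : H) : H →L[ℝ] H :=
  (innerSL ℝ x).smulRight x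

lemma outerProd_apply {H : Type*} [NormedAddCommGroup H] [InnerProductSpace ℝ H]
    (x y : H) : outerProd x y = ⟪x, y⟫ • x := rfl

/-- Cauchy–Schwarz for a symmetric nonnegative bilinear form given by an operator. -/
lemma cs_aux {H : Type*} [NormedAddCommGroup H] [InnerProductSpace ℝ H]
    (B : H →L[ℝ] H) (hSym : ∀ a b : H, ⟪B a, b⟫ = ⟪a, B b⟫)
    (hPos : ∀ a : H, 0 ≤ ⟪a, B a⟫) (u v : H) :
    ⟪u, B v⟫ ^ 2 ≤ ⟪u, B u⟫ * ⟪v, B v⟫ := by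
  have h : ∀ t : ℝ, 0 ≤ ⟪v, B v⟫ * (t * t) + (2 * ⟪u, B v⟫) * t + ⟪u, B u⟫ := by
    intro t
    have h0 := hPos (u + t • v)
    have expand : ⟪u + t • v, B (u + t • v)⟫
        = ⟪v, B v⟫ * (t * t) + (2 * ⟪u, B v⟫) * t + ⟪u, B u⟫ := by
      have hvu : ⟪v, B u⟫ = ⟪u, B v⟫ := by
        rw [← hSym v u, real_inner_comm]
      simp only [map_add, _root_.map_smul, inner_add_left, inner_add_right,
        real_inner_smul_left, real_inner_smul_right, hvu]
      ring
    linarith [expand ▸ h0]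
  have hd := discrim_le_zero h
  rw [discrim] at hd
  nlinarith [hd]

theorem stmt_11
    {H : Type*} [NormedAddCommGroup H] [InnerProductSpace ℝ H] [CompleteSpace H]
    [SecondCountableTopology H]
    (ρ : ℝ) (hρ : 0 < ρ) (X : H)
    (Binv : H →L[ℝ] H)
    (hBinv : Binv ∘L (ρ • (1 : H →L[ℝ] H) + outerProd X) = 1 ∧
      (ρ • (1 : H →L[ℝ] H) + outerProd X) ∘L Binv = 1)
    (V : H →L[ℝ] H) (hV : V.IsPositive) (hle : (V - outerProd X).IsPositive)
    (Q Qinv : H →L[ℝ] H)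
    (hQpos : Q.IsPositive)
    (hQsq : Q ∘L Q = ρ • (1 : H →L[ℝ] H) + V)
    (hQinv : Qinv ∘L Q = 1 ∧ Q ∘L Qinv = 1) :
    ⟪ X, Binv X ⟫ = ‖X‖ ^ 2 / (ρ + ‖X‖ ^ 2) ∧
      ‖Qinv X‖ ^ 2 ≤ ‖X‖ ^ 2 / (ρ + ‖X‖ ^ 2) ∧
      ‖X‖ ^ 2 / (ρ + ‖X‖ ^ 2) ≤ 1 := by
  set B : H →L[ℝ] H := ρ • (1 : H →L[ℝ] H) + outerProd X with hBdef
  have hden : 0 < ρ + ‖X‖ ^ 2 := by positivity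
  set c : ℝ := (ρ + ‖X‖ ^ 2)⁻¹ with hc
  have hcpos : 0 < c := inv_pos.mpr hden
  -- B applied
  have hBapp : ∀ z : H, B z = ρ • z + ⟪X, z⟫ • X := by
    intro z
    simp [hBdef, outerProd_apply, ContinuousLinearMap.add_apply,
      ContinuousLinearMap.smul_apply]
  -- B (c • X) = X
  have hBcX : B (c • X) = X := by
    rw [hBapp, real_inner_smul_right, real_inner_self_eq_norm_sq, smul_smul, ← add_smul]
    have h1 : ρ * c + c * ‖X‖ ^ 2 = 1 := by
      rw [hc]; field_simp
    rw [h1, one_smul]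
  -- Binv X = c • X
  have hBinvX : Binv X = c • X := by
    have h := congrArg (fun T : H →L[ℝ] H => T (c • X)) hBinv.1
    simp only [ContinuousLinearMap.comp_apply, ContinuousLinearMap.one_apply] at h
    rw [hBcX] at h
    exact h
  -- Part 1
  have part1 : ⟪X, Binv X⟫ = ‖X‖ ^ 2 / (ρ + ‖X‖ ^ 2) := by
    rw [hBinvX, real_inner_smul_right, real_inner_self_eq_norm_sq, div_eq_inv_mul, hc]
  -- Part 3
  have part3 : ‖X‖ ^ 2 / (ρ + ‖X‖ ^ 2) ≤ 1 := by
    rw [div_le_one hden]; linarith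
  refine ⟨part1, ?_, part3⟩
  -- Symmetry facts
  have QSym : ∀ a b : H, ⟪Q a, b⟫ = ⟪a, Q b⟫ := fun a b =>
    hQpos.1 a b
  have hQQinv : ∀ a : H, Q (Qinv a) = a := by
    intro a
    have h := congrArg (fun T : H →L[ℝ] H => T a) hQinv.2
    simpa [ContinuousLinearMap.comp_apply] using h
  have QinvSym : ∀ a b : H, ⟪Qinv a, b⟫ = ⟪a, Qinv b⟫ := by
    intro a b
    calc ⟪Qinv a, b⟫ = ⟪Qinv a, Q (Qinv b)⟫ := by rw [hQQinv]
      _ = ⟪Q (Qinv a), Qinv b⟫ := (QSym _ _).symm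
      _ = ⟪a, Qinv b⟫ := by rw [hQQinv]
  have BSym : ∀ a b : H, ⟪B a, b⟫ = ⟪a, B b⟫ := by
    intro a b
    simp only [hBapp, inner_add_left, inner_add_right, real_inner_smul_left,
      real_inner_smul_right]
    rw [real_inner_comm a X]
    ring
  have BPos : ∀ a : H, 0 ≤ ⟪a, B a⟫ := by
    intro a
    rw [hBapp, inner_add_right, real_inner_smul_right, real_inner_smul_right,
      real_inner_self_eq_norm_sq, real_inner_comm X a]
    nlinarith [sq_nonneg ‖a‖, sq_nonneg ⟪a, X⟫, hρ.le]
  -- quadratic form comparison B ⪯ Q²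
  have hQ2 : ∀ z : H, ⟪z, B z⟫ ≤ ⟪z, Q (Q z)⟫ := by
    intro z
    have h0 : 0 ≤ ⟪(V - outerProd X) z, z⟫ := by
      simpa [ContinuousLinearMap.reApplyInnerSelf] using hle.2 z
    have hQQz : Q (Q z) = ρ • z + V z := by
      have h := congrArg (fun T : H →L[ℝ] H => T z) hQsq
      simpa [ContinuousLinearMap.comp_apply, ContinuousLinearMap.add_apply,
        ContinuousLinearMap.smul_apply] using h
    have hsub : ⟪(V - outerProd X) z, z⟫ = ⟪z, Q (Q z)⟫ - ⟪z, B z⟫ := by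
      rw [hQQz, hBapp, ContinuousLinearMap.sub_apply, outerProd_apply]
      simp only [inner_sub_left, inner_add_right, real_inner_smul_left,
        real_inner_smul_right]
      rw [real_inner_comm (V z) z, real_inner_comm z X]
      ring
    linarith [hsub ▸ h0]
  -- main estimate
  set y : H := Qinv X with hy
  set z : H := Qinv y with hz
  have hQz : Q z = y := hQQinv y
  have hXz : ⟪X, z⟫ = ‖y‖ ^ 2 := by
    rw [hz, ← QinvSym X y, ← hy, real_inner_self_eq_norm_sq]
  have hcs := cs_aux B BSym BPos (c • X) z
  have e1 : ⟪c • X, B z⟫ = ‖y‖ ^ 2 := by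
    rw [← BSym, hBcX, hXz]
  have e2 : ⟪c • X, B (c • X)⟫ = c * ‖X‖ ^ 2 := by
    rw [hBcX, real_inner_smul_left, real_inner_self_eq_norm_sq]
  have e3 : ⟪z, Q (Q z)⟫ = ‖y‖ ^ 2 := by
    rw [← QSym, hQz, real_inner_self_eq_norm_sq]
  have key : (‖y‖ ^ 2) ^ 2 ≤ c * ‖X‖ ^ 2 * ‖y‖ ^ 2 := by
    have h4 := hQ2 z
    rw [e1, e2] at hcs
    have hcX : 0 ≤ c * ‖X‖ ^ 2 := by positivity
    nlinarith [hcs, h4, e3]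
  have hfin : ‖y‖ ^ 2 ≤ c * ‖X‖ ^ 2 := by
    by_cases hy0 : ‖y‖ = 0
    · have h0 : (0:ℝ) ≤ c * ‖X‖ ^ 2 := by positivity
      have : ‖y‖ ^ 2 = 0 := by rw [hy0]; ring
      linarith
    · have : 0 < ‖y‖ ^ 2 := by positivity
      nlinarith [key]
  rw [div_eq_inv_mul, ← hc]
  exact hfin
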